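/- Define g(η) = 1 − 2 f(η)(f(η) + η) where f(η) = (1/√π) · exp(−η²)/(1 + erf(η)). Then g is strictly increasing on [0, ∞). -/

import Mathlib

open Real

noncomputable def erf (z : ℝ) : ℝ := (2 / Real.sqrt π) * ∫ s in (0:ℝ)..z, Real.exp (-s^2)

noncomputable def f (η : ℝ) : ℝ := (1 / Real.sqrt π) * Real.exp (-η^2) / (1 + erf η)

noncomputable def g (η : ℝ) : ℝ := 1 - 2 * f η * (f η + η)

noncomputable def hfun (η : ℝ) : ℝ := (f η + η) * (2 * f η + η)

lemma sqrt_pi_pos : 0 < Real.sqrt π := Real.sqrt_pos.mpr Real.pi_pos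

lemma cont_gauss : Continuous fun s : ℝ => Real.exp (-s^2) := by continuity

lemma hasDerivAt_erf (z : ℝ) :
    HasDerivAt erf (2 / Real.sqrt π * Real.exp (-z^2)) z := by
  have h := intervalIntegral.integral_hasDerivAt_right
    (cont_gauss.intervalIntegrable 0 z)
    (cont_gauss.stronglyMeasurableAtFilter _ _)
    cont_gauss.continuousAt
  exact h.const_mul (2 / Real.sqrt π)

lemma erf_nonneg {η : ℝ} (hη : 0 ≤ η) : 0 ≤ erf η := by
  unfold erf
  have h1 : 0 ≤ ∫ s in (0:ℝ)..η, Real.exp (-s^2) :=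
    intervalIntegral.integral_nonneg hη (fun x _ => (Real.exp_pos _).le)
  positivity

lemma erf_le {η : ℝ} (hη : 0 ≤ η) : erf η ≤ 2 * η / Real.sqrt π := by
  have h1 : (∫ s in (0:ℝ)..η, Real.exp (-s^2)) ≤ ∫ _ in (0:ℝ)..η, (1:ℝ) := by
    apply intervalIntegral.integral_mono_on hη (cont_gauss.intervalIntegrable 0 η)
      (intervalIntegrable_const)
    intro x _
    rw [Real.exp_le_one_iff]
    nlinarith [sq_nonneg x]
  simp only [intervalIntegral.integral_const, smul_eq_mul, mul_one, sub_zero] at h1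
  unfold erf
  have h2 : 0 < (Real.sqrt π)⁻¹ := inv_pos.mpr sqrt_pi_pos
  rw [div_eq_mul_inv, div_eq_mul_inv]
  nlinarith

lemma one_add_erf_pos {η : ℝ} (hη : 0 ≤ η) : 0 < 1 + erf η := by
  linarith [erf_nonneg hη]

lemma hasDerivAt_f {η : ℝ} (hη : 0 ≤ η) :
    HasDerivAt f (-2 * f η * (f η + η)) η := by
  have hD : 0 < 1 + erf η := one_add_erf_pos hη
  have hN : HasDerivAt (fun x : ℝ => 1 / Real.sqrt π * Real.exp (-x^2))
      (1 / Real.sqrt π * (Real.exp (-η^2) * (-(2*η)))) η := by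
    have h1 : HasDerivAt (fun x : ℝ => -x^2) (-(2*η)) η := by
      exact ((hasDerivAt_pow 2 η).neg).congr_deriv (by norm_num)
    exact (h1.exp).const_mul _
  have hDd : HasDerivAt (fun x : ℝ => 1 + erf x) (2 / Real.sqrt π * Real.exp (-η^2)) η :=
    (hasDerivAt_erf η).const_add 1
  set A := 1 / Real.sqrt π * Real.exp (-η^2) with hA
  set D := 1 + erf η with hDdef
  have hN' : HasDerivAt (fun x : ℝ => 1 / Real.sqrt π * Real.exp (-x^2)) (-(2*η) * A) η := by
    convert hN using 1; rw [hA]; ring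
  have hDd' : HasDerivAt (fun x : ℝ => 1 + erf x) (2 * A) η := by
    convert hDd using 1; rw [hA]; ring
  have h := hN'.div hDd' hD.ne'
  rw [← hA, ← hDdef] at h
  have heq : f η = A / D := rfl
  clear_value A D
  refine h.congr_deriv ?_
  rw [heq]
  field_simp
  ring

lemma hasDerivAt_g {η : ℝ} (hη : 0 ≤ η) :
    HasDerivAt g (2 * f η * (2 * (f η + η) * (2 * f η + η) - 1)) η := by
  have hf := hasDerivAt_f hη
  have h : HasDerivAt (fun x => 2 * f x * (f x + x))
      (2 * (-2 * f η * (f η + η)) * (f η + η) + 2 * f η * ((-2 * f η * (f η + η)) + 1)) η :=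
    ((hf.const_mul 2).mul (hf.add (hasDerivAt_id η)))
  have h2 := (hasDerivAt_const η (1:ℝ)).sub h
  refine h2.congr_deriv ?_
  ring

lemma f_pos {η : ℝ} (hη : 0 ≤ η) : 0 < f η := by
  have := one_add_erf_pos hη
  unfold f
  positivity

lemma sqrt_pi_bounds : 1.772 < Real.sqrt π ∧ Real.sqrt π < 1.7725 := by
  have h := Real.sq_sqrt Real.pi_pos.le
  constructor <;> nlinarith [Real.pi_gt_d6, Real.pi_lt_d6, sqrt_pi_pos]

lemma f_lower {η : ℝ} (hη : 0 ≤ η) :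
    1 - η^2 ≤ f η * (Real.sqrt π + 2*η) := by
  set s := Real.sqrt π with hs
  have hsp : 0 < s := sqrt_pi_pos
  set D := 1 + erf η with hDdef
  have hD : 0 < D := one_add_erf_pos hη
  have hDs : D * s ≤ s + 2 * η := by
    have h0 := erf_le hη
    have h1 : erf η * s ≤ 2 * η := (le_div_iff₀ hsp).mp h0
    nlinarith
  have hA : f η = 1 / s * Real.exp (-η^2) / D := rfl
  have hexp1 : 1 - η^2 ≤ Real.exp (-η^2) := by
    have := Real.add_one_le_exp (-η^2); linarith
  have hfpos : 0 < f η := f_pos hη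
  have hfD : f η * D = 1 / s * Real.exp (-η^2) := by
    rw [hA]; field_simp
  -- f η * (s + 2η) ≥ f η * D * s = (1/s) exp * s = exp ≥ 1 - η²
  have h1 : f η * (D * s) ≤ f η * (s + 2*η) := by
    apply mul_le_mul_of_nonneg_left hDs hfpos.le
  have h2 : f η * (D * s) = Real.exp (-η^2) := by
    rw [← mul_assoc, hfD]; field_simp
  linarith

lemma key {η : ℝ} (hη : 0 < η) : 1 < 2 * (f η + η) * (2 * f η + η) := by
  set s := Real.sqrt π with hs
  obtain ⟨hs1, hs2⟩ := sqrt_pi_bounds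
  have hsp : 0 < s := sqrt_pi_pos
  have hfl := f_lower hη.le
  have hfp := f_pos hη.le
  set F := f η with hF
  rcases le_or_gt (1/2 : ℝ) (η^2) with hc | hc
  · nlinarith [mul_pos hfp hη]
  · -- u := F*(s+2η) ≥ 1-η² ≥ 0
    have hd : 0 < s + 2*η := by linarith
    nlinarith [mul_le_mul_of_nonneg_right hfl hd.le, sq_nonneg (F*(s+2*η) - (1-η^2)),
      mul_pos hfp hd, mul_pos hη hsp, mul_pos (mul_pos hη hη) (mul_pos hη hsp),
      sq_nonneg (s - 1.772)]

theorem stmt1 : StrictMonoOn g (Set.Ici (0:ℝ)) := by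
  apply strictMonoOn_of_deriv_pos (convex_Ici 0)
  · intro x hx
    exact (hasDerivAt_g hx).continuousAt.continuousWithinAt
  · intro x hx
    rw [interior_Ici] at hx
    rw [(hasDerivAt_g hx.le).deriv]
    have h1 := f_pos hx.le
    have h2 := key hx
    nlinarith
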